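/- arXiv:1503.06944 — 4 statements merged into one kernel-verified Lean document; each statement's English description precedes it below -/
import Mathlib

section
/- Let H be a hypothesis class, and let P_S and P_T be probability distributions over X×Y with respective marginals D_S and D_T over X. For every probability distribution ρ over H: R_{P_T}(G_ρ) ≤ R_{P_S}(G_ρ) + (1/2)·dis_ρ(D_S,D_T) + λ_ρ, where λ_ρ = | e_{P_T}(G_ρ,G_ρ) − e_{P_S}(G_ρ,G_ρ) |. -/
open MeasureTheory
open scoped ENNReal

noncomputable section

variable {H X : Type*} [MeasurableSpace H] [MeasurableSpace X]

/-- Disagreement indicator `1[h(x) ≠ h'(x)]` for a pair of classifiers. -/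
def dAgree (f : H → X → Bool) (hh : H × H) (x : X) : ℝ :=
  if f hh.1 x = f hh.2 x then 0 else 1

/-- Expected disagreement `R_D(Gρ,Gρ) = E_{(h,h')∼ρ×ρ} E_{x∼D} 1[h(x)≠h'(x)]`. -/
def expDis (f : H → X → Bool) (ρ : Measure H) (D : Measure X) : ℝ :=
  ∫ hh : H × H, ∫ x, dAgree f hh x ∂D ∂(ρ.prod ρ)

/-- Empirical disagreement `(1/m) Σ_i E_{(h,h')∼ρ×ρ} 1[h(x_i)≠h'(x_i)]`. -/
def empDis (f : H → X → Bool) (ρ : Measure H) {m : ℕ} (s : Fin m → X) : ℝ :=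
  (1 / (m : ℝ)) * ∑ i, ∫ hh : H × H, dAgree f hh (s i) ∂(ρ.prod ρ)

/-- Kullback-Leibler divergence `KL(ρ‖π) = E_{h∼ρ} ln (dρ/dπ (h))`. -/
def KLd (ρ π : Measure H) : ℝ := ∫ h, Real.log ((ρ.rnDeriv π h).toReal) ∂ρ

/-- Error indicator `1[h(x) ≠ y]` on a labeled example. -/
def errInd (f : H → X → Bool) (h : H) (z : X × Bool) : ℝ :=
  if f h z.1 = z.2 then 0 else 1

/-- Gibbs risk `R_P(Gρ) = E_{h∼ρ} E_{(x,y)∼P} 1[h(x)≠y]`. -/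
def gibbsRisk (f : H → X → Bool) (ρ : Measure H) (P : Measure (X × Bool)) : ℝ :=
  ∫ h, ∫ z, errInd f h z ∂P ∂ρ

/-- Expected joint error `e_P(Gρ,Gρ) = E_{(h,h')∼ρ×ρ} E_{(x,y)∼P} 1[h(x)≠y]·1[h'(x)≠y]`. -/
def jointErr (f : H → X → Bool) (ρ : Measure H) (P : Measure (X × Bool)) : ℝ :=
  ∫ hh : H × H, ∫ z, errInd f hh.1 z * errInd f hh.2 z ∂P ∂(ρ.prod ρ)

/-- Empirical Gibbs risk `(1/m) Σ_i E_{h∼ρ} 1[h(x_i)≠y_i]`. -/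
def empGibbs (f : H → X → Bool) (ρ : Measure H) {m : ℕ} (s : Fin m → X × Bool) : ℝ :=
  (1 / (m : ℝ)) * ∑ i, ∫ h, errInd f h (s i) ∂ρ

section Aux

variable {f : H → X → Bool}

lemma errInd_mem (h : H) (z : X × Bool) : errInd f h z = 0 ∨ errInd f h z = 1 := by
  unfold errInd; split <;> simp

lemma abs_errInd_le (h : H) (z : X × Bool) : |errInd f h z| ≤ 1 := by
  rcases errInd_mem (f := f) h z with h1 | h1 <;> simp [h1]

lemma abs_dAgree_le (hh : H × H) (x : X) : |dAgree f hh x| ≤ 1 := by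
  unfold dAgree; split <;> simp

lemma measurable_errInd (hf : Measurable (Function.uncurry f)) :
    Measurable (fun p : H × (X × Bool) => errInd f p.1 p.2) := by
  unfold errInd
  apply Measurable.ite _ measurable_const measurable_const
  exact measurableSet_eq_fun (hf.comp (measurable_fst.prodMk (measurable_fst.comp measurable_snd)))
    (measurable_snd.comp measurable_snd)

lemma measurable_dAgree (hf : Measurable (Function.uncurry f)) :
    Measurable (fun p : (H × H) × X => dAgree f p.1 p.2) := by
  unfold dAgree
  apply Measurable.ite _ measurable_const measurable_const
  exact measurableSet_eq_fun
    (hf.comp ((measurable_fst.comp measurable_fst).prodMk measurable_snd))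
    (hf.comp ((measurable_snd.comp measurable_fst).prodMk measurable_snd))

lemma key_pointwise (hh : H × H) (z : X × Bool) :
    errInd f hh.1 z + errInd f hh.2 z
      = dAgree f hh z.1 + 2 * (errInd f hh.1 z * errInd f hh.2 z) := by
  unfold errInd dAgree
  rcases hh with ⟨h1, h2⟩
  rcases z with ⟨x, y⟩
  cases hb1 : f h1 x <;> cases hb2 : f h2 x <;> cases y <;> simp [hb1, hb2] <;> norm_num

lemma abs_int_le {α : Type*} [MeasurableSpace α] {μ : Measure α} (g : α → ℝ) :
    |∫ x, g x ∂μ| ≤ ∫ x, |g x| ∂μ := by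
  simpa [Real.norm_eq_abs] using norm_integral_le_integral_norm (μ := μ) g

lemma integrable_of_meas_bounded {α : Type*} [MeasurableSpace α] {μ : Measure α}
    [IsFiniteMeasure μ] {g : α → ℝ} (hm : AEStronglyMeasurable g μ) (hb : ∀ x, |g x| ≤ 1) :
    Integrable g μ :=
  ⟨hm, HasFiniteIntegral.of_bounded (C := 1) (Filter.Eventually.of_forall hb)⟩

lemma gibbs_decomp (hf : Measurable (Function.uncurry f))
    (P : Measure (X × Bool)) [IsProbabilityMeasure P]
    (ρ : Measure H) [IsProbabilityMeasure ρ] :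
    gibbsRisk f ρ P = (1 / 2) * expDis f ρ (P.map Prod.fst) + jointErr f ρ P := by
  -- inner integrals
  set g : H → ℝ := fun h => ∫ z, errInd f h z ∂P with hg
  have hgb : ∀ h, |g h| ≤ 1 := by
    intro h
    calc |g h| ≤ ∫ z, |errInd f h z| ∂P := abs_int_le _
    _ ≤ ∫ _z, (1 : ℝ) ∂P := by
        apply integral_mono_of_nonneg (Filter.Eventually.of_forall (fun z => abs_nonneg _))
          (integrable_const 1) (Filter.Eventually.of_forall (fun z => abs_errInd_le h z))
    _ = 1 := by simp
  have hgm : StronglyMeasurable g :=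
    (measurable_errInd hf).stronglyMeasurable.integral_prod_right'
  -- the function A hh = ∫ dAgree f hh x d(P.map fst)
  set A : H × H → ℝ := fun hh => ∫ x, dAgree f hh x ∂(P.map Prod.fst) with hA
  set B : H × H → ℝ := fun hh => ∫ z, errInd f hh.1 z * errInd f hh.2 z ∂P with hB
  have hmapP : IsProbabilityMeasure (P.map Prod.fst) := Measure.isProbabilityMeasure_map
    measurable_fst.aemeasurable
  have hAb : ∀ hh, |A hh| ≤ 1 := by
    intro hh
    calc |A hh| ≤ ∫ x, |dAgree f hh x| ∂(P.map Prod.fst) := abs_int_le _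
    _ ≤ ∫ _x, (1 : ℝ) ∂(P.map Prod.fst) := by
        apply integral_mono_of_nonneg (Filter.Eventually.of_forall (fun x => abs_nonneg _))
          (integrable_const 1) (Filter.Eventually.of_forall (fun x => abs_dAgree_le hh x))
    _ = 1 := by simp
  have hBb : ∀ hh, |B hh| ≤ 1 := by
    intro hh
    calc |B hh| ≤ ∫ z, |errInd f hh.1 z * errInd f hh.2 z| ∂P := abs_int_le _
    _ ≤ ∫ _z, (1 : ℝ) ∂P := by
        apply integral_mono_of_nonneg (Filter.Eventually.of_forall (fun z => abs_nonneg _))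
          (integrable_const 1)
        apply Filter.Eventually.of_forall
        intro z
        dsimp only
        rw [abs_mul]
        calc |errInd f hh.1 z| * |errInd f hh.2 z| ≤ 1 * 1 :=
          mul_le_mul (abs_errInd_le _ _) (abs_errInd_le _ _) (abs_nonneg _) zero_le_one
        _ = 1 := by norm_num
    _ = 1 := by simp
  have hAm : StronglyMeasurable A :=
    (measurable_dAgree hf).stronglyMeasurable.integral_prod_right'
  have hBm : StronglyMeasurable B := by
    apply StronglyMeasurable.integral_prod_right' (f := fun p : (H × H) × (X × Bool) =>
      errInd f p.1.1 p.2 * errInd f p.1.2 p.2)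
    apply Measurable.stronglyMeasurable
    exact ((measurable_errInd hf).comp
        ((measurable_fst.comp measurable_fst).prodMk measurable_snd)).mul
      ((measurable_errInd hf).comp
        ((measurable_snd.comp measurable_fst).prodMk measurable_snd))
  -- rewrite (ρ.prod ρ)-integrals of g ∘ fst and g ∘ snd
  have hfst : ∫ hh : H × H, g hh.1 ∂(ρ.prod ρ) = ∫ h, g h ∂ρ := by
    rw [← integral_map measurable_fst.aemeasurable
      (hgm.aestronglyMeasurable (μ := (ρ.prod ρ).map Prod.fst)), Measure.map_fst_prod]
    simp
  have hsnd : ∫ hh : H × H, g hh.2 ∂(ρ.prod ρ) = ∫ h, g h ∂ρ := by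
    rw [← integral_map measurable_snd.aemeasurable
      (hgm.aestronglyMeasurable (μ := (ρ.prod ρ).map Prod.snd)), Measure.map_snd_prod]
    simp
  -- pointwise equality of inner integrals: g hh.1 + g hh.2 = A hh + 2 * B hh
  have hpt : ∀ hh : H × H, g hh.1 + g hh.2 = A hh + 2 * B hh := by
    intro hh
    have hint1 : Integrable (fun z => errInd f hh.1 z) P :=
      integrable_of_meas_bounded
        (((measurable_errInd hf).comp (measurable_const.prodMk measurable_id)).aestronglyMeasurable)
        (fun z => abs_errInd_le _ _)
    have hint2 : Integrable (fun z => errInd f hh.2 z) P :=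
      integrable_of_meas_bounded
        (((measurable_errInd hf).comp (measurable_const.prodMk measurable_id)).aestronglyMeasurable)
        (fun z => abs_errInd_le _ _)
    have hAeq : A hh = ∫ z, dAgree f hh z.1 ∂P := by
      rw [hA]
      simp only
      rw [integral_map measurable_fst.aemeasurable]
      exact (((measurable_dAgree hf).comp
        (measurable_const.prodMk measurable_id)).aestronglyMeasurable (μ := P.map Prod.fst))
    have : g hh.1 + g hh.2 = ∫ z, (errInd f hh.1 z + errInd f hh.2 z) ∂P :=
      (integral_add hint1 hint2).symm
    rw [this]
    have hreq : (fun z => errInd f hh.1 z + errInd f hh.2 z)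
        = fun z => dAgree f hh z.1 + 2 * (errInd f hh.1 z * errInd f hh.2 z) := by
      funext z; exact key_pointwise hh z
    rw [hreq, integral_add, hAeq.symm, integral_const_mul]
    · apply integrable_of_meas_bounded
      · exact (((measurable_dAgree hf).comp
          (measurable_const.prodMk measurable_fst)).aestronglyMeasurable)
      · exact fun z => abs_dAgree_le _ _
    · apply Integrable.const_mul
      apply integrable_of_meas_bounded (hint1.1.mul hint2.1)
      intro z
      simp only [Pi.mul_apply, abs_mul]
      calc |errInd f hh.1 z| * |errInd f hh.2 z| ≤ 1 * 1 :=
        mul_le_mul (abs_errInd_le _ _) (abs_errInd_le _ _) (abs_nonneg _) zero_le_one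
      _ = 1 := by norm_num
  -- combine
  have hA_int : Integrable A (ρ.prod ρ) :=
    integrable_of_meas_bounded hAm.aestronglyMeasurable hAb
  have hB_int : Integrable B (ρ.prod ρ) :=
    integrable_of_meas_bounded hBm.aestronglyMeasurable hBb
  have hg1_int : Integrable (fun hh : H × H => g hh.1) (ρ.prod ρ) :=
    integrable_of_meas_bounded
      ((hgm.comp_measurable measurable_fst).aestronglyMeasurable) (fun hh => hgb _)
  have hg2_int : Integrable (fun hh : H × H => g hh.2) (ρ.prod ρ) :=
    integrable_of_meas_bounded
      ((hgm.comp_measurable measurable_snd).aestronglyMeasurable) (fun hh => hgb _)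
  have hsum : (∫ hh : H × H, g hh.1 ∂(ρ.prod ρ)) + (∫ hh : H × H, g hh.2 ∂(ρ.prod ρ))
      = (∫ hh, A hh ∂(ρ.prod ρ)) + 2 * (∫ hh, B hh ∂(ρ.prod ρ)) := by
    rw [← integral_add hg1_int hg2_int]
    have : (fun hh : H × H => g hh.1 + g hh.2) = fun hh => A hh + 2 * B hh := funext hpt
    rw [this, integral_add hA_int (hB_int.const_mul 2), integral_const_mul]
  have hgibbs : gibbsRisk f ρ P = ∫ h, g h ∂ρ := rfl
  have hexp : expDis f ρ (P.map Prod.fst) = ∫ hh, A hh ∂(ρ.prod ρ) := rfl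
  have hjoint : jointErr f ρ P = ∫ hh, B hh ∂(ρ.prod ρ) := rfl
  rw [hfst, hsnd] at hsum
  rw [hgibbs, hexp, hjoint]
  linarith

end Aux

/-- Theorem 9 (domain adaptation bound for the Gibbs classifier):
`R_{P_T}(Gρ) ≤ R_{P_S}(Gρ) + (1/2) dis_ρ(D_S,D_T) + λ_ρ`. -/
theorem da_bound_gibbs
    (f : H → X → Bool) (hf : Measurable (Function.uncurry f))
    (PS PT : Measure (X × Bool)) [IsProbabilityMeasure PS] [IsProbabilityMeasure PT]
    (ρ : Measure H) [IsProbabilityMeasure ρ] :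
    gibbsRisk f ρ PT
      ≤ gibbsRisk f ρ PS
        + (1 / 2) * |expDis f ρ (PT.map Prod.fst) - expDis f ρ (PS.map Prod.fst)|
        + |jointErr f ρ PT - jointErr f ρ PS| := by
  
  have hT := gibbs_decomp (f := f) hf PT ρ
  have hS := gibbs_decomp (f := f) hf PS ρ
  have h1 : expDis f ρ (PT.map Prod.fst) - expDis f ρ (PS.map Prod.fst)
      ≤ |expDis f ρ (PT.map Prod.fst) - expDis f ρ (PS.map Prod.fst)| := le_abs_self _
  have h2 : jointErr f ρ PT - jointErr f ρ PS ≤ |jointErr f ρ PT - jointErr f ρ PS| :=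
    le_abs_self _
  linarith
end
end

section
/- Let H be a hypothesis class and P a probability distribution over X×Y with marginal D over X. For every probability distribution ρ over H, the Gibbs risk decomposes as R_P(G_ρ) = (1/2)·R_D(G_ρ,G_ρ) + e_P(G_ρ,G_ρ). -/
open MeasureTheory
open scoped ENNReal

noncomputable section

variable {H X : Type*} [MeasurableSpace H] [MeasurableSpace X]

/-- A measurable function bounded by 1 is integrable on a finite measure space. -/
lemma integrable_of_le_one {α : Type*} [MeasurableSpace α] (μ : Measure α)
    [IsFiniteMeasure μ] {g : α → ℝ} (hm : AEStronglyMeasurable g μ)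
    (hb : ∀ a, ‖g a‖ ≤ 1) : Integrable g μ :=
  (integrable_const (1 : ℝ)).mono' hm (Filter.Eventually.of_forall hb)

lemma errInd_norm_le_one (f : H → X → Bool) (h : H) (z : X × Bool) :
    ‖errInd f h z‖ ≤ 1 := by
  unfold errInd; split_ifs <;> simp

lemma dAgree_norm_le_one (f : H → X → Bool) (hh : H × H) (x : X) :
    ‖dAgree f hh x‖ ≤ 1 := by
  unfold dAgree; split_ifs <;> simp

lemma measurable_errInd_pair {f : H → X → Bool} (hf : Measurable (Function.uncurry f)) :
    Measurable (fun p : H × (X × Bool) => errInd f p.1 p.2) := by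
  unfold errInd
  apply Measurable.ite _ measurable_const measurable_const
  have hm : Measurable fun p : H × (X × Bool) => (f p.1 p.2.1, p.2.2) := by
    apply Measurable.prodMk
    · exact hf.comp (measurable_fst.prodMk (measurable_fst.comp measurable_snd))
    · exact measurable_snd.comp measurable_snd
  have hset : MeasurableSet {q : Bool × Bool | q.1 = q.2} :=
    (Set.to_countable _).measurableSet
  exact hm hset

lemma measurable_dAgree_pair {f : H → X → Bool} (hf : Measurable (Function.uncurry f)) :
    Measurable (fun p : (H × H) × X => dAgree f p.1 p.2) := by
  unfold dAgree
  apply Measurable.ite _ measurable_const measurable_const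
  have hm : Measurable fun p : (H × H) × X => (f p.1.1 p.2, f p.1.2 p.2) := by
    apply Measurable.prodMk
    · exact hf.comp ((measurable_fst.comp measurable_fst).prodMk measurable_snd)
    · exact hf.comp ((measurable_snd.comp measurable_fst).prodMk measurable_snd)
  have hset : MeasurableSet {q : Bool × Bool | q.1 = q.2} :=
    (Set.to_countable _).measurableSet
  exact hm hset

/-- The key pointwise identity. -/
lemma pointwise_decomp (f : H → X → Bool) (hh : H × H) (z : X × Bool) :
    (1 / 2 : ℝ) * dAgree f hh z.1 + errInd f hh.1 z * errInd f hh.2 z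
      = (1 / 2 : ℝ) * (errInd f hh.1 z + errInd f hh.2 z) := by
  obtain ⟨x, y⟩ := z
  simp only [dAgree, errInd]
  cases h1 : f hh.1 x <;> cases h2 : f hh.2 x <;> cases y <;> norm_num

/-- Gibbs risk decomposition: `R_P(Gρ) = (1/2) R_D(Gρ,Gρ) + e_P(Gρ,Gρ)`,
where `D` is the marginal of `P` over `X`. -/
theorem gibbs_risk_decomposition
    (f : H → X → Bool) (hf : Measurable (Function.uncurry f))
    (P : Measure (X × Bool)) [IsProbabilityMeasure P]
    (ρ : Measure H) [IsProbabilityMeasure ρ] :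
    gibbsRisk f ρ P = (1 / 2) * expDis f ρ (P.map Prod.fst) + jointErr f ρ P := by
  set g : H → ℝ := fun h => ∫ z, errInd f h z ∂P with hg_def
  have hmeas_err := measurable_errInd_pair (f := f) hf
  have hmeas_dag := measurable_dAgree_pair (f := f) hf
  -- measurability of errInd for fixed h
  have hmeas_err_fix : ∀ h : H, Measurable fun z : X × Bool => errInd f h z := fun h =>
    hmeas_err.comp (measurable_const.prodMk measurable_id)
  have hint_err : ∀ h : H, Integrable (fun z => errInd f h z) P := fun h =>
    integrable_of_le_one P (hmeas_err_fix h).aestronglyMeasurable (errInd_norm_le_one f h)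
  -- measurability of dAgree for fixed hh
  have hmeas_dag_fix : ∀ hh : H × H, Measurable fun x : X => dAgree f hh x := fun hh =>
    hmeas_dag.comp (measurable_const.prodMk measurable_id)
  -- g is strongly measurable and bounded
  have hg_sm : StronglyMeasurable g :=
    hmeas_err.stronglyMeasurable.integral_prod_right'
  have hg_bd : ∀ h, ‖g h‖ ≤ 1 := by
    intro h
    calc ‖g h‖ ≤ ∫ z, ‖errInd f h z‖ ∂P := norm_integral_le_integral_norm _
    _ ≤ ∫ _z, (1 : ℝ) ∂P :=
        integral_mono_of_nonneg (Filter.Eventually.of_forall fun z => norm_nonneg _)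
          (integrable_const 1) (Filter.Eventually.of_forall fun z => errInd_norm_le_one f h z)
    _ = 1 := by simp
  -- Step A : the inner integral of dAgree over the marginal equals integral over P
  have stepA : ∀ hh : H × H, ∫ x, dAgree f hh x ∂(P.map Prod.fst)
      = ∫ z, dAgree f hh z.1 ∂P := by
    intro hh
    rw [integral_map measurable_fst.aemeasurable (hmeas_dag_fix hh).aestronglyMeasurable]
  -- Step B : inner decomposition for each hh
  have stepB : ∀ hh : H × H,
      (1 / 2 : ℝ) * (∫ z, dAgree f hh z.1 ∂P)
        + ∫ z, errInd f hh.1 z * errInd f hh.2 z ∂P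
      = (1 / 2 : ℝ) * (g hh.1 + g hh.2) := by
    intro hh
    have hint_dag : Integrable (fun z : X × Bool => dAgree f hh z.1) P :=
      integrable_of_le_one P
        (((hmeas_dag_fix hh).comp measurable_fst).aestronglyMeasurable)
        (fun z => dAgree_norm_le_one f hh z.1)
    have hint_prod : Integrable (fun z => errInd f hh.1 z * errInd f hh.2 z) P := by
      apply integrable_of_le_one P
        (((hmeas_err_fix hh.1).mul (hmeas_err_fix hh.2)).aestronglyMeasurable)
      intro z
      calc ‖errInd f hh.1 z * errInd f hh.2 z‖
          = ‖errInd f hh.1 z‖ * ‖errInd f hh.2 z‖ := norm_mul _ _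
        _ ≤ 1 * 1 := mul_le_mul (errInd_norm_le_one f hh.1 z) (errInd_norm_le_one f hh.2 z)
            (norm_nonneg _) zero_le_one
        _ = 1 := one_mul 1
    calc (1 / 2 : ℝ) * (∫ z, dAgree f hh z.1 ∂P)
          + ∫ z, errInd f hh.1 z * errInd f hh.2 z ∂P
        = ∫ z, ((1 / 2 : ℝ) * dAgree f hh z.1
            + errInd f hh.1 z * errInd f hh.2 z) ∂P := by
          rw [integral_add (hint_dag.const_mul _) hint_prod, integral_const_mul]
      _ = ∫ z, (1 / 2 : ℝ) * (errInd f hh.1 z + errInd f hh.2 z) ∂P := by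
          exact integral_congr_ae (Filter.Eventually.of_forall fun z => pointwise_decomp f hh z)
      _ = (1 / 2 : ℝ) * (g hh.1 + g hh.2) := by
          rw [integral_const_mul, integral_add (hint_err hh.1) (hint_err hh.2)]
  -- integrability over ρ.prod ρ
  have hA_int : Integrable (fun hh : H × H => ∫ x, dAgree f hh x ∂(P.map Prod.fst))
      (ρ.prod ρ) := by
    apply integrable_of_le_one (ρ.prod ρ)
    · exact (hmeas_dag.stronglyMeasurable.integral_prod_right').aestronglyMeasurable
    · intro hh
      calc ‖∫ x, dAgree f hh x ∂(P.map Prod.fst)‖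
          ≤ ∫ x, ‖dAgree f hh x‖ ∂(P.map Prod.fst) := norm_integral_le_integral_norm _
        _ ≤ ∫ _x, (1 : ℝ) ∂(P.map Prod.fst) :=
            integral_mono_of_nonneg (Filter.Eventually.of_forall fun x => norm_nonneg _)
              (integrable_const 1)
              (Filter.Eventually.of_forall fun x => dAgree_norm_le_one f hh x)
        _ = 1 := by
            have : IsProbabilityMeasure (P.map Prod.fst) :=
              Measure.isProbabilityMeasure_map measurable_fst.aemeasurable
            simp
  have hmeas_prod : Measurable fun p : (H × H) × (X × Bool) =>
      errInd f p.1.1 p.2 * errInd f p.1.2 p.2 := by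
    apply Measurable.mul
    · exact hmeas_err.comp ((measurable_fst.comp measurable_fst).prodMk measurable_snd)
    · exact hmeas_err.comp ((measurable_snd.comp measurable_fst).prodMk measurable_snd)
  have hB_int : Integrable
      (fun hh : H × H => ∫ z, errInd f hh.1 z * errInd f hh.2 z ∂P) (ρ.prod ρ) := by
    apply integrable_of_le_one (ρ.prod ρ)
    · exact (hmeas_prod.stronglyMeasurable.integral_prod_right').aestronglyMeasurable
    · intro hh
      calc ‖∫ z, errInd f hh.1 z * errInd f hh.2 z ∂P‖
          ≤ ∫ z, ‖errInd f hh.1 z * errInd f hh.2 z‖ ∂P := norm_integral_le_integral_norm _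
        _ ≤ ∫ _z, (1 : ℝ) ∂P := by
            apply integral_mono_of_nonneg (Filter.Eventually.of_forall fun z => norm_nonneg _)
              (integrable_const 1)
            apply Filter.Eventually.of_forall
            intro z
            calc ‖errInd f hh.1 z * errInd f hh.2 z‖
                = ‖errInd f hh.1 z‖ * ‖errInd f hh.2 z‖ := norm_mul _ _
              _ ≤ 1 * 1 := mul_le_mul (errInd_norm_le_one f hh.1 z)
                  (errInd_norm_le_one f hh.2 z) (norm_nonneg _) zero_le_one
              _ = 1 := one_mul 1
        _ = 1 := by simp
  have hgfst_int : Integrable (fun hh : H × H => g hh.1) (ρ.prod ρ) :=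
    integrable_of_le_one (ρ.prod ρ)
      ((hg_sm.comp_measurable measurable_fst).aestronglyMeasurable)
      (fun hh => hg_bd hh.1)
  have hgsnd_int : Integrable (fun hh : H × H => g hh.2) (ρ.prod ρ) :=
    integrable_of_le_one (ρ.prod ρ)
      ((hg_sm.comp_measurable measurable_snd).aestronglyMeasurable)
      (fun hh => hg_bd hh.2)
  have hfst : ∫ hh : H × H, g hh.1 ∂(ρ.prod ρ) = ∫ h, g h ∂ρ := by
    rw [integral_prod _ hgfst_int]
    simp
  have hsnd : ∫ hh : H × H, g hh.2 ∂(ρ.prod ρ) = ∫ h, g h ∂ρ := by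
    rw [integral_prod _ hgsnd_int]
    simp
  -- put everything together
  have : (1 / 2 : ℝ) * expDis f ρ (P.map Prod.fst) + jointErr f ρ P
      = ∫ h, g h ∂ρ := by
    unfold expDis jointErr
    rw [← integral_const_mul, ← integral_add (hA_int.const_mul _) hB_int]
    have : ∀ hh : H × H,
        (1 / 2 : ℝ) * (∫ x, dAgree f hh x ∂(P.map Prod.fst))
          + ∫ z, errInd f hh.1 z * errInd f hh.2 z ∂P
        = (1 / 2 : ℝ) * (g hh.1 + g hh.2) := by
      intro hh; rw [stepA hh]; exact stepB hh
    rw [integral_congr_ae (Filter.Eventually.of_forall this), integral_const_mul,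
      integral_add hgfst_int hgsnd_int, hfst, hsnd]
    ring
  rw [this]
  rfl
end
end

section
/- For all real numbers a, b ∈ [−1,+1], the inequality kl( (1+|a|)/2 ‖ (1+|b|)/2 ) ≤ kl( (1+a)/2 ‖ (1+b)/2 ) holds, where the values are taken in the extended nonnegative reals. -/
open scoped ENNReal

noncomputable section

/-- Binary Kullback-Leibler divergence `kl(q‖p)`, valued in `[0,∞]`, with the
conventions `0·ln(0/p) = 0` and `q·ln(q/0) = +∞` for `q > 0`. -/
def klBin (q p : ℝ) : ℝ≥0∞ :=
  if (p = 0 ∧ q ≠ 0) ∨ (p = 1 ∧ q ≠ 1) then ⊤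
  else ENNReal.ofReal (q * Real.log (q / p) + (1 - q) * Real.log ((1 - q) / (1 - p)))

lemma klBin_symm (q p : ℝ) : klBin (1 - q) (1 - p) = klBin q p := by
  unfold klBin
  have hc : ((1 - p = 0 ∧ 1 - q ≠ 0) ∨ (1 - p = 1 ∧ 1 - q ≠ 1)) ↔
      ((p = 0 ∧ q ≠ 0) ∨ (p = 1 ∧ q ≠ 1)) := by
    constructor
    · rintro (⟨h1, h2⟩ | ⟨h1, h2⟩)
      · exact Or.inr ⟨by linarith, fun h => h2 (by linarith)⟩
      · exact Or.inl ⟨by linarith, fun h => h2 (by linarith)⟩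
    · rintro (⟨h1, h2⟩ | ⟨h1, h2⟩)
      · exact Or.inr ⟨by linarith, fun h => h2 (by linarith)⟩
      · exact Or.inl ⟨by linarith, fun h => h2 (by linarith)⟩
  split_ifs with h1 h2 h2
  · rfl
  · exact absurd (hc.mp h1) h2
  · exact absurd (hc.mpr h2) h1
  · congr 1
    rw [show (1 : ℝ) - (1 - q) = q from by ring, show (1 : ℝ) - (1 - p) = p from by ring]
    ring

lemma klBin_flip_le {q p : ℝ} (hq : 1/2 ≤ q) (hq1 : q ≤ 1) (hp0 : 0 ≤ p) (hp : p ≤ 1/2) :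
    klBin q (1 - p) ≤ klBin q p := by
  rcases eq_or_lt_of_le hp0 with h0 | h0
  · -- p = 0 : RHS is ⊤
    unfold klBin
    have : (p = 0 ∧ q ≠ 0) ∨ (p = 1 ∧ q ≠ 1) := Or.inl ⟨h0.symm, by intro h; rw [h] at hq; norm_num at hq⟩
    rw [if_pos this]
    exact le_top
  · -- 0 < p ≤ 1/2
    have h1p : (0 : ℝ) < 1 - p := by linarith
    unfold klBin
    have hL : ¬ ((1 - p = 0 ∧ q ≠ 0) ∨ (1 - p = 1 ∧ q ≠ 1)) := by
      rintro (⟨h1, _⟩ | ⟨h1, _⟩) <;> linarith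
    have hR : ¬ ((p = 0 ∧ q ≠ 0) ∨ (p = 1 ∧ q ≠ 1)) := by
      rintro (⟨h1, _⟩ | ⟨h1, _⟩) <;> linarith
    rw [if_neg hL, if_neg hR]
    apply ENNReal.ofReal_le_ofReal
    have e1 : q * Real.log (q / p) - q * Real.log (q / (1 - p)) = q * Real.log ((1 - p) / p) := by
      rcases eq_or_ne q 0 with h | h
      · simp [h]
      · rw [Real.log_div h h0.ne', Real.log_div h h1p.ne', Real.log_div h1p.ne' h0.ne']
        ring
    have e2 : (1 - q) * Real.log ((1 - q) / (1 - p)) - (1 - q) * Real.log ((1 - q) / p)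
        = -((1 - q) * Real.log ((1 - p) / p)) := by
      rcases eq_or_ne (1 - q) 0 with h | h
      · simp [h]
      · rw [Real.log_div h h0.ne', Real.log_div h h1p.ne', Real.log_div h1p.ne' h0.ne']
        ring
    have hLog : 0 ≤ Real.log ((1 - p) / p) := by
      apply Real.log_nonneg
      rw [le_div_iff₀ h0]
      linarith
    have hkey : (1 - q) * Real.log ((1 - p) / p) ≤ q * Real.log ((1 - p) / p) :=
      mul_le_mul_of_nonneg_right (by linarith) hLog
    -- goal: q * log (q/(1-p)) + (1-q) * log ((1-q)/(1-(1-p))) ≤ q * log (q/p) + (1-q) * log ((1-q)/(1-p))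
    rw [show (1 : ℝ) - (1 - p) = p from by ring]
    linarith [e1, e2, hkey]

/-- Lemma 25: for all `a, b ∈ [−1,1]`,
`kl((1+|a|)/2 ‖ (1+|b|)/2) ≤ kl((1+a)/2 ‖ (1+b)/2)`. -/
theorem klBin_abs_le (a b : ℝ) (ha : a ∈ Set.Icc (-1 : ℝ) 1) (hb : b ∈ Set.Icc (-1 : ℝ) 1) :
    klBin ((1 + |a|) / 2) ((1 + |b|) / 2) ≤ klBin ((1 + a) / 2) ((1 + b) / 2) := by
  obtain ⟨ha1, ha2⟩ := ha
  obtain ⟨hb1, hb2⟩ := hb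
  rcases le_or_gt 0 a with hha | hha <;> rcases le_or_gt 0 b with hhb | hhb
  · rw [abs_of_nonneg hha, abs_of_nonneg hhb]
  · -- a ≥ 0, b < 0
    rw [abs_of_nonneg hha, abs_of_neg hhb,
      show (1 + -b) / 2 = 1 - (1 + b) / 2 from by ring]
    exact klBin_flip_le (by linarith) (by linarith) (by linarith) (by linarith)
  · -- a < 0, b ≥ 0
    rw [abs_of_neg hha, abs_of_nonneg hhb,
      show (1 + -a) / 2 = (1 - a) / 2 from by ring,
      show (1 + b) / 2 = 1 - (1 - b) / 2 from by ring]
    calc klBin ((1 - a) / 2) (1 - (1 - b) / 2)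
        ≤ klBin ((1 - a) / 2) ((1 - b) / 2) :=
          klBin_flip_le (by linarith) (by linarith) (by linarith) (by linarith)
      _ = klBin (1 - (1 - a) / 2) (1 - (1 - b) / 2) := (klBin_symm _ _).symm
      _ = klBin ((1 + a) / 2) (1 - (1 - b) / 2) := by rw [show 1 - (1 - a) / 2 = (1 + a) / 2 from by ring]
  · -- a < 0, b < 0
    rw [abs_of_neg hha, abs_of_neg hhb,
      show (1 + -a) / 2 = 1 - (1 + a) / 2 from by ring,
      show (1 + -b) / 2 = 1 - (1 + b) / 2 from by ring,
      klBin_symm]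
end
end

section
/- Let w ∈ ℝ^d and let ρ_w be the Gaussian probability measure on ℝ^d with mean w and identity covariance (the product of d standard normal distributions shifted by w). Let P be a probability distribution over ℝ^d × {−1,+1} such that x ≠ 0 P-almost surely. Then the Gibbs risk of ρ_w over the family of linear classifiers h_{w'}(x) = sign(w'·x) satisfies R_P(G_{ρ_w}) = E_{(x,y)∼P} Φ( y·(w·x)/‖x‖ ), where Φ(a) = Pr_{t∼N(0,1)}(t ≥ a) is the standard Gaussian upper tail probability. -/
open MeasureTheory ProbabilityTheory Real
open scoped NNReal ENNReal

noncomputable section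

lemma exponent_identity (m1 m2 : ℝ) (a b : ℝ) (ha : 0 < a) (hb : 0 < b) (s t : ℝ) :
    -(t - m1)^2 / (2*a) + -(s - t - m2)^2 / (2*b)
      = -(s - (m1 + m2))^2 / (2*(a+b))
        + -((a+b)/(2*a*b)) * (t - (m1 + a*(s - m1 - m2)/(a+b)))^2 := by
  have h1 : a ≠ 0 := ha.ne'
  have h2 : b ≠ 0 := hb.ne'
  have h3 : a + b ≠ 0 := by positivity
  field_simp
  ring

lemma gauss_prod_form (m1 m2 : ℝ) (v1 v2 : ℝ≥0) (h1 : v1 ≠ 0) (h2 : v2 ≠ 0) (s : ℝ) :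
    ∀ t, gaussianPDFReal m1 v1 t * gaussianPDFReal m2 v2 (s - t)
        = ((Real.sqrt (2 * π * (v1:ℝ)))⁻¹ * (Real.sqrt (2 * π * (v2:ℝ)))⁻¹
            * Real.exp (-(s - (m1 + m2))^2 / (2*((v1:ℝ)+(v2:ℝ)))))
          * Real.exp (-(((v1:ℝ)+(v2:ℝ))/(2*(v1:ℝ)*(v2:ℝ)))
              * (t - (m1 + (v1:ℝ)*(s - m1 - m2)/((v1:ℝ)+(v2:ℝ))))^2) := by
  have ha : 0 < (v1:ℝ) := by simpa [pos_iff_ne_zero] using h1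
  have hb : 0 < (v2:ℝ) := by simpa [pos_iff_ne_zero] using h2
  intro t
  rw [gaussianPDFReal, gaussianPDFReal, mul_mul_mul_comm, ← Real.exp_add]
  have hexp : rexp (-(t - m1)^2 / (2*(v1:ℝ)) + -(s - t - m2)^2 / (2*(v2:ℝ)))
      = rexp (-(s - (m1 + m2))^2 / (2*((v1:ℝ)+(v2:ℝ))))
        * rexp (-(((v1:ℝ)+(v2:ℝ))/(2*(v1:ℝ)*(v2:ℝ)))
            * (t - (m1 + (v1:ℝ)*(s - m1 - m2)/((v1:ℝ)+(v2:ℝ))))^2) := by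
    rw [← Real.exp_add]
    congr 1
    exact exponent_identity m1 m2 _ _ ha hb s t
  rw [hexp]; ring

lemma pdf_conv (m1 m2 : ℝ) (v1 v2 : ℝ≥0) (h1 : v1 ≠ 0) (h2 : v2 ≠ 0) (s : ℝ) :
    ∫ t, gaussianPDFReal m1 v1 t * gaussianPDFReal m2 v2 (s - t)
      = gaussianPDFReal (m1 + m2) (v1 + v2) s := by
  have ha : 0 < (v1:ℝ) := by simpa [pos_iff_ne_zero] using h1
  have hb : 0 < (v2:ℝ) := by simpa [pos_iff_ne_zero] using h2
  set a := (v1:ℝ) with haa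
  set b := (v2:ℝ) with hbb
  have hab : 0 < a + b := by positivity
  set B : ℝ := (a+b)/(2*a*b) with hB
  have hBpos : 0 < B := by positivity
  set c : ℝ := m1 + a*(s - m1 - m2)/(a+b) with hc
  set A : ℝ := -(s - (m1 + m2))^2 / (2*(a+b)) with hA
  simp_rw [gauss_prod_form m1 m2 v1 v2 h1 h2 s]
  rw [integral_const_mul]
  have hshift : (∫ t, Real.exp (-B * (t - c)^2)) = ∫ t, Real.exp (-B * t^2) :=
    integral_sub_right_eq_self (fun t => Real.exp (-B * t^2)) c
  rw [hshift, integral_gaussian]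
  rw [gaussianPDFReal]
  have hvv : ((v1 + v2 : ℝ≥0) : ℝ) = a + b := by push_cast; ring
  rw [hvv]
  have hconst : (Real.sqrt (2 * π * a))⁻¹ * (Real.sqrt (2 * π * b))⁻¹ * Real.sqrt (π / B)
      = (Real.sqrt (2 * π * (a+b)))⁻¹ := by
    rw [← Real.sqrt_inv, ← Real.sqrt_inv, ← Real.sqrt_mul (by positivity),
      ← Real.sqrt_mul (by positivity), ← Real.sqrt_inv]
    congr 1
    rw [hB]
    field_simp
  calc (Real.sqrt (2 * π * a))⁻¹ * (Real.sqrt (2 * π * b))⁻¹ * Real.exp A * Real.sqrt (π / B)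
      = ((Real.sqrt (2 * π * a))⁻¹ * (Real.sqrt (2 * π * b))⁻¹ * Real.sqrt (π / B)) * Real.exp A := by ring
    _ = (Real.sqrt (2 * π * (a+b)))⁻¹ * Real.exp A := by rw [hconst]

lemma pdf_conv_integrable (m1 m2 : ℝ) (v1 v2 : ℝ≥0) (h1 : v1 ≠ 0) (h2 : v2 ≠ 0) (s : ℝ) :
    Integrable (fun t => gaussianPDFReal m1 v1 t * gaussianPDFReal m2 v2 (s - t)) := by
  have ha : 0 < (v1:ℝ) := by simpa [pos_iff_ne_zero] using h1
  have hb : 0 < (v2:ℝ) := by simpa [pos_iff_ne_zero] using h2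
  have hB : 0 < ((v1:ℝ)+(v2:ℝ))/(2*(v1:ℝ)*(v2:ℝ)) := by positivity
  simp_rw [gauss_prod_form m1 m2 v1 v2 h1 h2 s]
  exact ((integrable_exp_neg_mul_sq hB).comp_sub_right _).const_mul _

lemma pdf_conv' (m1 m2 : ℝ) (v1 v2 : ℝ≥0) (h1 : v1 ≠ 0) (h2 : v2 ≠ 0) (s : ℝ) :
    ∫⁻ t, gaussianPDF m1 v1 t * gaussianPDF m2 v2 (s - t)
      = gaussianPDF (m1 + m2) (v1 + v2) s := by
  have hint := pdf_conv_integrable m1 m2 v1 v2 h1 h2 s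
  have hnn : 0 ≤ᵐ[volume] fun t => gaussianPDFReal m1 v1 t * gaussianPDFReal m2 v2 (s - t) :=
    Filter.Eventually.of_forall fun t =>
      mul_nonneg (gaussianPDFReal_nonneg _ _ _) (gaussianPDFReal_nonneg _ _ _)
  simp_rw [gaussianPDF,
    ← ENNReal.ofReal_mul (gaussianPDFReal_nonneg m1 v1 _)]
  rw [← ofReal_integral_eq_lintegral_ofReal hint hnn, pdf_conv m1 m2 v1 v2 h1 h2 s]

lemma gaussianReal_prod_add (m1 m2 : ℝ) (v1 v2 : ℝ≥0) :
    ((gaussianReal m1 v1).prod (gaussianReal m2 v2)).map (fun p : ℝ × ℝ => p.1 + p.2)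
      = gaussianReal (m1 + m2) (v1 + v2) := by
  by_cases h1 : v1 = 0
  · subst h1
    rw [gaussianReal_zero_var, MeasureTheory.Measure.dirac_prod,
      Measure.map_map measurable_add (measurable_prodMk_left)]
    have : ((fun p : ℝ × ℝ => p.1 + p.2) ∘ (Prod.mk m1)) = fun x => x + m1 := by
      funext x; simp [add_comm]
    rw [this, gaussianReal_map_add_const, add_comm m2 m1, zero_add]
  by_cases h2 : v2 = 0
  · subst h2
    rw [gaussianReal_zero_var, MeasureTheory.Measure.prod_dirac,
      Measure.map_map measurable_add (measurable_prodMk_right)]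
    have : ((fun p : ℝ × ℝ => p.1 + p.2) ∘ (fun x => (x, m2))) = fun x => x + m2 := by
      funext x; simp
    rw [this, gaussianReal_map_add_const, add_zero]
  ext s hs
  rw [Measure.map_apply measurable_add hs, Measure.prod_apply (measurable_add hs)]
  rw [gaussianReal_of_var_ne_zero m1 h1, gaussianReal_of_var_ne_zero m2 h2,
    gaussianReal_of_var_ne_zero _ (by simp [h1, h2])]
  rw [lintegral_withDensity_eq_lintegral_mul volume (measurable_gaussianPDF m1 v1)
    (measurable_measure_prodMk_left (measurable_add hs))]
  have hinner : ∀ t : ℝ, (volume.withDensity (gaussianPDF m2 v2))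
        (Prod.mk t ⁻¹' ((fun p : ℝ × ℝ => p.1 + p.2) ⁻¹' s))
      = ∫⁻ u, s.indicator (fun _ => (1:ℝ≥0∞)) u * gaussianPDF m2 v2 (u - t) := by
    intro t
    rw [withDensity_apply _ (measurable_prodMk_left (measurable_add hs)),
      ← lintegral_indicator (measurable_prodMk_left (measurable_add hs))]
    have hpt : ∀ u, (Prod.mk t ⁻¹' ((fun p : ℝ × ℝ => p.1 + p.2) ⁻¹' s)).indicator
          (gaussianPDF m2 v2) u
        = (fun r => s.indicator (fun _ => (1:ℝ≥0∞)) r * gaussianPDF m2 v2 (r - t)) (u + t) := by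
      intro u
      have hmem : (u ∈ Prod.mk t ⁻¹' ((fun p : ℝ × ℝ => p.1 + p.2) ⁻¹' s)) ↔ u + t ∈ s := by
        simp [add_comm t u]
      by_cases h : u + t ∈ s
      · simp [Set.indicator, hmem, h, add_sub_cancel_right]
      · simp [Set.indicator, hmem, h]
    simp_rw [hpt]
    exact lintegral_add_right_eq_self
      (fun r => s.indicator (fun _ => (1:ℝ≥0∞)) r * gaussianPDF m2 v2 (r - t)) t
  simp only [Pi.mul_apply]
  simp_rw [hinner]
  have hpull : ∀ t : ℝ, gaussianPDF m1 v1 t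
        * ∫⁻ u, s.indicator (fun _ => (1:ℝ≥0∞)) u * gaussianPDF m2 v2 (u - t)
      = ∫⁻ u, gaussianPDF m1 v1 t
          * (s.indicator (fun _ => (1:ℝ≥0∞)) u * gaussianPDF m2 v2 (u - t)) :=
    fun t => (lintegral_const_mul' _ _ ENNReal.ofReal_ne_top).symm
  simp_rw [hpull]
  rw [lintegral_lintegral_swap]
  swap
  · apply Measurable.aemeasurable
    apply Measurable.mul
    · exact (measurable_gaussianPDF m1 v1).comp measurable_fst
    apply Measurable.mul
    · exact ((measurable_one.indicator hs)).comp measurable_snd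
    · exact (measurable_gaussianPDF m2 v2).comp (measurable_snd.sub measurable_fst)
  have hstep : ∀ u : ℝ, (∫⁻ t, gaussianPDF m1 v1 t
        * (s.indicator (fun _ => (1:ℝ≥0∞)) u * gaussianPDF m2 v2 (u - t)))
      = s.indicator (fun _ => (1:ℝ≥0∞)) u * gaussianPDF (m1 + m2) (v1 + v2) u := by
    intro u
    simp_rw [mul_left_comm (gaussianPDF m1 v1 _)]
    rw [lintegral_const_mul' _ _ (by
      by_cases h : u ∈ s <;> simp [Set.indicator, h]),
      pdf_conv' m1 m2 v1 v2 h1 h2 u]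
  simp_rw [hstep]
  have : ∀ u, s.indicator (fun _ => (1:ℝ≥0∞)) u * gaussianPDF (m1 + m2) (v1 + v2) u
      = s.indicator (gaussianPDF (m1 + m2) (v1 + v2)) u := by
    intro u; by_cases h : u ∈ s <;> simp [Set.indicator, h]
  simp_rw [this]
  rw [lintegral_indicator hs, withDensity_apply _ hs]

lemma map_dot (n : ℕ) (w x : Fin n → ℝ) :
    (Measure.pi fun i => gaussianReal (w i) 1).map (fun w' => ∑ i, w' i * x i)
      = gaussianReal (∑ i, w i * x i) (∑ i, (⟨x i ^ 2, sq_nonneg _⟩ : ℝ≥0)) := by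
  induction n with
  | zero =>
      simp only [Finset.univ_eq_empty, Finset.sum_empty]
      rw [Measure.map_const]
      erw [Finset.sum_empty, gaussianReal_zero_var]
      simp
  | succ n ih =>
      set e := MeasurableEquiv.piFinSuccAbove (fun _ : Fin (n+1) => ℝ) 0 with he
      have hmp := measurePreserving_piFinSuccAbove (fun i => gaussianReal (w i) 1) 0
      set g : ℝ × (Fin n → ℝ) → ℝ :=
        fun p => p.1 * x 0 + ∑ j, p.2 j * x (Fin.succ j) with hg
      have hfe : (fun w' : Fin (n+1) → ℝ => ∑ i, w' i * x i) = g ∘ e := by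
        funext w'
        simp only [hg, he, Function.comp_apply, MeasurableEquiv.piFinSuccAbove_apply]
        rw [Fin.sum_univ_succ]
        simp [Fin.succAbove, Fin.tail]
      have hmeasg : Measurable g := by fun_prop
      rw [hfe, ← Measure.map_map hmeasg hmp.measurable, hmp.map_eq]
      have hgsplit : g = (fun q : ℝ × ℝ => q.1 + q.2)
          ∘ (Prod.map (· * x 0) (fun v : Fin n → ℝ => ∑ j, v j * x (Fin.succ j))) := rfl
      rw [hgsplit, ← Measure.map_map measurable_add (by fun_prop),
        ← Measure.map_prod_map _ _ (by fun_prop) (by fun_prop),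
        gaussianReal_map_mul_const (x 0)]
      have hsucc : (fun j : Fin n => Fin.succAbove 0 j) = Fin.succ := by
        funext j; simp [Fin.succAbove]
      rw [show (Measure.pi fun j : Fin n =>
            gaussianReal (w ((0 : Fin (n+1)).succAbove j)) 1).map
            (fun v : Fin n → ℝ => ∑ j, v j * x (Fin.succ j))
          = gaussianReal (∑ j : Fin n, w (Fin.succ j) * x (Fin.succ j))
              (∑ j : Fin n, (⟨x (Fin.succ j) ^ 2, sq_nonneg _⟩ : ℝ≥0)) by
        rw [show (fun j : Fin n => gaussianReal (w ((0 : Fin (n+1)).succAbove j)) 1)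
            = fun j : Fin n => gaussianReal ((w ∘ Fin.succ) j) 1 by
          funext j; simp [Fin.succAbove]]
        exact ih (w ∘ Fin.succ) (x ∘ Fin.succ)]
      rw [gaussianReal_prod_add]
      congr 1
      · rw [Fin.sum_univ_succ]; ring_nf
      · erw [Fin.sum_univ_succ]
        ext
        push_cast
        erw [NNReal.coe_add]
        rw [mul_one]
        rfl

lemma g01_neg_symm (a : ℝ) :
    gaussianReal 0 1 {t : ℝ | t ≤ -a} = gaussianReal 0 1 {t : ℝ | a ≤ t} := by
  have hmap : (gaussianReal (0:ℝ) 1).map (fun t => (-1:ℝ) * t) = gaussianReal 0 1 := by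
    rw [gaussianReal_map_const_mul]
    norm_num
  conv_rhs => rw [← hmap]
  rw [Measure.map_apply (by fun_prop)
    (show MeasurableSet {t : ℝ | a ≤ t} from measurableSet_Ici)]
  congr 1
  ext t
  simp only [Set.mem_preimage, Set.mem_setOf_eq]
  constructor <;> intro h <;> linarith

lemma point_eval (d : ℕ) (w x : Fin d → ℝ) (hx : x ≠ 0) (y : ℝ) (hy : y = 1 ∨ y = -1) :
    ((Measure.pi fun i => gaussianReal (w i) 1) {w' | y * ∑ i, w' i * x i ≤ 0}).toReal
      = ((gaussianReal 0 1)
          {t : ℝ | y * (∑ i, w i * x i) / Real.sqrt (∑ i, (x i) ^ 2) ≤ t}).toReal := by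
  have hfm : Measurable (fun w' : Fin d → ℝ => ∑ i, w' i * x i) := by fun_prop
  have hset : MeasurableSet {s : ℝ | y * s ≤ 0} :=
    measurableSet_le (by fun_prop) measurable_const
  have hV : 0 < ∑ i, (x i) ^ 2 := by
    rcases Function.ne_iff.mp hx with ⟨i, hi⟩
    exact Finset.sum_pos' (fun j _ => sq_nonneg _)
      ⟨i, Finset.mem_univ i, lt_of_le_of_ne (sq_nonneg _) (Ne.symm (pow_ne_zero 2 hi))⟩
  set V : ℝ := ∑ i, (x i) ^ 2 with hVdef
  set M : ℝ := ∑ i, w i * x i with hM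
  set r : ℝ := Real.sqrt V with hr
  have hrpos : 0 < r := Real.sqrt_pos.mpr hV
  set vr : ℝ≥0 := (⟨r^2, sq_nonneg _⟩ : ℝ≥0) with hvr
  have hVN : (∑ i, (⟨x i ^ 2, sq_nonneg _⟩ : ℝ≥0)) = vr * (1:ℝ≥0) := by
    apply NNReal.coe_injective
    erw [NNReal.coe_sum]
    push_cast [hvr]
    erw [mul_one]
    show V = r ^ 2
    rw [hr, Real.sq_sqrt hV.le]
  have h1 : {w' : Fin d → ℝ | y * ∑ i, w' i * x i ≤ 0}
      = (fun w' : Fin d → ℝ => ∑ i, w' i * x i) ⁻¹' {s : ℝ | y * s ≤ 0} := rfl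
  rw [h1, ← Measure.map_apply hfm hset, map_dot]
  erw [hVN]
  have hrep : gaussianReal M (vr * (1:ℝ≥0))
      = ((gaussianReal 0 1).map (· * r)).map (· + M) := by
    rw [gaussianReal_map_mul_const r, gaussianReal_map_add_const M, mul_zero, zero_add]
    rfl
  rw [hrep, Measure.map_apply (by fun_prop) hset,
    Measure.map_apply (by fun_prop) (hset.preimage (by fun_prop))]
  rcases hy with hy | hy
  · subst hy
    have hsets : ((· * r) ⁻¹' ((· + M) ⁻¹' {s : ℝ | (1:ℝ) * s ≤ 0}))
        = {t : ℝ | t ≤ -(M / r)} := by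
      ext t
      simp only [Set.mem_preimage, Set.mem_setOf_eq, one_mul]
      have hiff : t ≤ -(M/r) ↔ t * r + M ≤ 0 := by
        rw [← neg_div, le_div_iff₀ hrpos]
        constructor <;> intro h <;> linarith
      exact hiff.symm
    rw [hsets, g01_neg_symm]
    norm_num
  · subst hy
    have hsets : ((· * r) ⁻¹' ((· + M) ⁻¹' {s : ℝ | (-1:ℝ) * s ≤ 0}))
        = {t : ℝ | -M / r ≤ t} := by
      ext t
      simp only [Set.mem_preimage, Set.mem_setOf_eq]
      have hiff : -M/r ≤ t ↔ (-1:ℝ) * (t * r + M) ≤ 0 := by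
        rw [div_le_iff₀ hrpos]
        constructor <;> intro h <;> linarith
      exact hiff.symm
    rw [hsets]
    norm_num [neg_div]


/-- The standard Gaussian upper tail probability `Φ(a) = Pr_{t∼N(0,1)}(t ≥ a)`. -/
def gaussTail (a : ℝ) : ℝ := ((gaussianReal 0 1) {t : ℝ | a ≤ t}).toReal

/-- Gibbs risk of the isotropic Gaussian posterior `ρ_w` (mean `w`, identity
covariance) over linear classifiers `h_{w'}(x) = sign(w'·x)`:
`R_P(G_{ρ_w}) = E_{(x,y)∼P} Φ(y·(w·x)/‖x‖)`. -/
theorem gibbs_risk_gaussian_linear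
    (d : ℕ) (w : Fin d → ℝ)
    (P : Measure ((Fin d → ℝ) × ℝ)) [IsProbabilityMeasure P]
    (hy : ∀ᵐ z ∂P, z.2 = 1 ∨ z.2 = -1)
    (hx : ∀ᵐ z ∂P, z.1 ≠ 0) :
    (∫ w' : Fin d → ℝ,
        ∫ z, (if z.2 * (∑ i, w' i * z.1 i) ≤ 0 then (1 : ℝ) else 0) ∂P
      ∂(Measure.pi fun i => gaussianReal (w i) 1))
      = ∫ z, gaussTail (z.2 * (∑ i, w i * z.1 i)
                          / Real.sqrt (∑ i, (z.1 i) ^ 2)) ∂P := by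
  have hSmeas : MeasurableSet {p : (Fin d → ℝ) × ((Fin d → ℝ) × ℝ) |
      p.2.2 * ∑ i, p.1 i * p.2.1 i ≤ 0} := by
    apply measurableSet_le _ measurable_const
    apply Measurable.mul (measurable_snd.snd :)
    exact Finset.measurable_sum _ fun i _ =>
      ((measurable_pi_apply i).comp measurable_fst).mul
        ((measurable_pi_apply i).comp (measurable_fst.comp measurable_snd))
  have hf : Measurable (Function.uncurry fun (w' : Fin d → ℝ) (z : (Fin d → ℝ) × ℝ) =>
      (if z.2 * (∑ i, w' i * z.1 i) ≤ 0 then (1:ℝ) else 0)) := by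
    exact Measurable.ite hSmeas measurable_const measurable_const
  have hi : Integrable (Function.uncurry fun (w' : Fin d → ℝ) (z : (Fin d → ℝ) × ℝ) =>
      (if z.2 * (∑ i, w' i * z.1 i) ≤ 0 then (1:ℝ) else 0))
      ((Measure.pi fun i => gaussianReal (w i) 1).prod P) := by
    refine Integrable.mono' (integrable_const (1:ℝ)) hf.aestronglyMeasurable ?_
    refine Filter.Eventually.of_forall fun p => ?_
    by_cases h : p.2.2 * ∑ i, p.1 i * p.2.1 i ≤ 0 <;>
      simp [Function.uncurry, h]
  rw [integral_integral_swap hi]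
  refine integral_congr_ae ?_
  filter_upwards [hy, hx] with z hzy hzx
  have hsetz : MeasurableSet {w' : Fin d → ℝ | z.2 * ∑ i, w' i * z.1 i ≤ 0} := by
    apply measurableSet_le _ measurable_const
    exact Measurable.mul measurable_const
      (Finset.measurable_sum _ fun i _ => (measurable_pi_apply i).mul measurable_const)
  have hind : (∫ w', (if z.2 * (∑ i, w' i * z.1 i) ≤ 0 then (1:ℝ) else 0)
        ∂(Measure.pi fun i => gaussianReal (w i) 1))
      = ((Measure.pi fun i => gaussianReal (w i) 1)
          {w' | z.2 * ∑ i, w' i * z.1 i ≤ 0}).toReal := by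
    have heq : ∀ w' : Fin d → ℝ, (if z.2 * (∑ i, w' i * z.1 i) ≤ 0 then (1:ℝ) else 0)
        = Set.indicator {w' : Fin d → ℝ | z.2 * ∑ i, w' i * z.1 i ≤ 0}
            (fun _ => (1:ℝ)) w' := by
      intro w'
      rw [Set.indicator_apply]
      rfl
    simp_rw [heq]
    rw [integral_indicator_const _ hsetz, smul_eq_mul, mul_one]
    rfl
  rw [hind, point_eval d w z.1 hzx z.2 hzy, gaussTail]
end
end
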